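/- Let C be a Hom-finite Krull-Schmidt exact category over a commutative artinian ring k, and let α : X → Y be a deflation whose kernel K lies in C_l. Then α is right τ⁻(K)-determined. -/
import Mathlib


open CategoryTheory CategoryTheory.Limits

universe v u u'

variable {C : Type u} [Category.{v} C]

/-- `f` is right `Cd`-determined. -/
def RightDetermined {X Y : C} (f : X ⟶ Y) (Cd : C) : Prop :=
  ∀ ⦃T : C⦄ (g : T ⟶ Y), (∀ h : Cd ⟶ T, ∃ s : Cd ⟶ X, h ≫ g = s ≫ f) →
    ∃ t : T ⟶ X, g = t ≫ f

def LeftDetermined {X Y : C} (f : X ⟶ Y) (Kd : C) : Prop :=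
  ∀ ⦃T : C⦄ (g : X ⟶ T), (∀ h : T ⟶ Kd, ∃ s : Y ⟶ Kd, g ≫ h = f ≫ s) →
    ∃ t : Y ⟶ T, g = f ≫ t

def IsSummand (Z X : C) : Prop := ∃ (s : Z ⟶ X) (r : X ⟶ Z), s ≫ r = 𝟙 Z

section Preadd
variable [Preadditive C]

/-- membership in the radical of the category, via the Jacobson radical of `End`. -/
def radHom {T Z : C} (h : T ⟶ Z) : Prop :=
  ∀ u : Z ⟶ T, (u ≫ h : CategoryTheory.End Z) ∈ Ideal.jacobson (⊥ : Ideal (CategoryTheory.End Z))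

def AlmostFactorsThrough {X Y Z : C} (g : Z ⟶ Y) (f : X ⟶ Y) : Prop :=
  ¬ (∃ s : Z ⟶ X, g = s ≫ f) ∧
    ∀ ⦃T : C⦄ (h : T ⟶ Z), radHom h → ∃ s : T ⟶ X, h ≫ g = s ≫ f

def Indec (Z : C) : Prop :=
  ¬ Limits.IsZero Z ∧ ∀ e : Z ⟶ Z, e ≫ e = e → e = 0 ∨ e = 𝟙 Z

end Preadd

def RightAlmostSplit {E Y : C} (d : E ⟶ Y) : Prop :=
  ¬ (∃ s : Y ⟶ E, s ≫ d = 𝟙 Y) ∧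
    ∀ ⦃T : C⦄ (g : T ⟶ Y), ¬ (∃ s : Y ⟶ T, s ≫ g = 𝟙 Y) → ∃ t : T ⟶ E, t ≫ d = g

def LeftAlmostSplit {X E : C} (i : X ⟶ E) : Prop :=
  ¬ (∃ r : E ⟶ X, i ≫ r = 𝟙 X) ∧
    ∀ ⦃T : C⦄ (g : X ⟶ T), ¬ (∃ r : T ⟶ X, g ≫ r = 𝟙 X) → ∃ t : E ⟶ T, i ≫ t = g

def RightMinimal {X Y : C} (f : X ⟶ Y) : Prop :=
  ∀ g : X ⟶ X, g ≫ f = f → IsIso g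

def RightEquiv {X X' Y : C} (f : X ⟶ Y) (f' : X' ⟶ Y) : Prop :=
  (∃ u : X ⟶ X', f = u ≫ f') ∧ (∃ v : X' ⟶ X, f' = v ≫ f)

/-- A Quillen exact structure on an additive category. -/
class ExactStruct (C : Type u) [Category.{v} C] [Preadditive C] [HasZeroObject C]
    [HasBinaryBiproducts C] where
  IsConflation : ∀ {X E Y : C}, (X ⟶ E) → (E ⟶ Y) → Prop
  comp_zero : ∀ {X E Y : C} {i : X ⟶ E} {d : E ⟶ Y}, IsConflation i d → i ≫ d = 0
  isKernel : ∀ {X E Y : C} {i : X ⟶ E} {d : E ⟶ Y}, IsConflation i d →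
    ∀ {T : C} (g : T ⟶ E), g ≫ d = 0 → ∃! t : T ⟶ X, t ≫ i = g
  isCokernel : ∀ {X E Y : C} {i : X ⟶ E} {d : E ⟶ Y}, IsConflation i d →
    ∀ {T : C} (g : E ⟶ T), i ≫ g = 0 → ∃! t : Y ⟶ T, d ≫ t = g
  split_conflation : ∀ X Y : C, IsConflation (biprod.inl : X ⟶ X ⊞ Y) (biprod.snd : X ⊞ Y ⟶ Y)
  defl_comp : ∀ {X Y Z : C} (d : X ⟶ Y) (d' : Y ⟶ Z),
    (∃ (K : C) (i : K ⟶ X), IsConflation i d) → (∃ (K : C) (i : K ⟶ Y), IsConflation i d') →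
    ∃ (K : C) (i : K ⟶ X), IsConflation i (d ≫ d')
  infl_comp : ∀ {X Y Z : C} (i : X ⟶ Y) (i' : Y ⟶ Z),
    (∃ (W : C) (d : Y ⟶ W), IsConflation i d) → (∃ (W : C) (d : Z ⟶ W), IsConflation i' d) →
    ∃ (W : C) (d : Z ⟶ W), IsConflation (i ≫ i') d
  pullback_defl : ∀ {X Y Z : C} (d : X ⟶ Y) (g : Z ⟶ Y),
    (∃ (K : C) (i : K ⟶ X), IsConflation i d) →
    ∃ (E : C) (g' : E ⟶ X) (d' : E ⟶ Z), IsPullback g' d' d g ∧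
      ∃ (K : C) (i : K ⟶ E), IsConflation i d'
  pushout_infl : ∀ {X Y Z : C} (i : X ⟶ Y) (g : X ⟶ Z),
    (∃ (W : C) (d : Y ⟶ W), IsConflation i d) →
    ∃ (E : C) (i' : Z ⟶ E) (g' : Y ⟶ E), IsPushout i g g' i' ∧
      ∃ (W : C) (d : E ⟶ W), IsConflation i' d

section Exact
variable [Preadditive C] [HasZeroObject C] [HasBinaryBiproducts C] [ExactStruct C]

def IsDeflation {X Y : C} (d : X ⟶ Y) : Prop :=
  ∃ (K : C) (i : K ⟶ X), ExactStruct.IsConflation i d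

def IsInflation {X Y : C} (i : X ⟶ Y) : Prop :=
  ∃ (Z : C) (d : Y ⟶ Z), ExactStruct.IsConflation i d

/-- projectively trivial morphisms: those factoring through every deflation onto the target. -/
def ProjTrivial {X Y : C} (f : X ⟶ Y) : Prop :=
  ∀ ⦃E : C⦄ (d : E ⟶ Y), IsDeflation d → ∃ g : X ⟶ E, f = g ≫ d

/-- injectively trivial morphisms: those factoring through every inflation from the source. -/
def InjTrivial {X Y : C} (f : X ⟶ Y) : Prop :=
  ∀ ⦃E : C⦄ (i : X ⟶ E), IsInflation i → ∃ g : E ⟶ Y, f = i ≫ g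

/-- `f` factors through `α` in the projectively stable category. -/
def StablyFactors {T X Y : C} (f : T ⟶ Y) (α : X ⟶ Y) : Prop :=
  ∃ g : T ⟶ X, ProjTrivial (f - g ≫ α)

/-- `α` is right `Cd`-determined in the projectively stable category. -/
def RightDeterminedStable {X Y : C} (α : X ⟶ Y) (Cd : C) : Prop :=
  ∀ ⦃T : C⦄ (g : T ⟶ Y), (∀ h : Cd ⟶ T, StablyFactors (h ≫ g) α) → StablyFactors g α

/-- `X ≅ Y` in the projectively stable category. -/
def StablyIso (X Y : C) : Prop :=
  ∃ (f : X ⟶ Y) (g : Y ⟶ X), ProjTrivial (f ≫ g - 𝟙 X) ∧ ProjTrivial (g ≫ f - 𝟙 Y)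

def ProjObj (P : C) : Prop :=
  ∀ ⦃E : C⦄ (d : E ⟶ P), IsDeflation d → ∃ s : P ⟶ E, s ≫ d = 𝟙 P

def InjObj (I : C) : Prop :=
  ∀ ⦃E : C⦄ (i : I ⟶ E), IsInflation i → ∃ r : E ⟶ I, i ≫ r = 𝟙 I

def AlmostSplitConflation {X E Y : C} (i : X ⟶ E) (d : E ⟶ Y) : Prop :=
  ExactStruct.IsConflation i d ∧ LeftAlmostSplit i ∧ RightAlmostSplit d

/-- membership in `𝒞_l`: every indecomposable direct summand is injective or is the first
term of an almost split conflation. -/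
def MemCl (K : C) : Prop :=
  ∀ Z : C, IsSummand Z K → Indec Z →
    InjObj Z ∨ ∃ (E W : C) (i : Z ⟶ E) (d : E ⟶ W), AlmostSplitConflation i d

/-- membership in `𝒞_r`: every indecomposable direct summand is projective or is the third
term of an almost split conflation. -/
def MemCr (X : C) : Prop :=
  ∀ Z : C, IsSummand Z X → Indec Z →
    ProjObj Z ∨ ∃ (K E : C) (i : K ⟶ E) (d : E ⟶ Z), AlmostSplitConflation i d

end Exact

/-- Krull–Schmidt: every object is a finite biproduct of objects with local endomorphism ring. -/
class KrullSchmidtCat (C : Type u) [Category.{v} C] [Preadditive C]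
    [HasFiniteBiproducts C] : Prop where
  decomp : ∀ X : C, ∃ (n : ℕ) (f : Fin n → C),
    (∀ i, IsLocalRing (CategoryTheory.End (f i))) ∧ Nonempty (X ≅ ⨁ f)


section AuxLemmas
variable [Preadditive C] [HasZeroObject C] [HasBinaryBiproducts C] [ExactStruct C]

lemma defl_cancel {X E Y : C} {i : X ⟶ E} {d : E ⟶ Y} (h : ExactStruct.IsConflation i d)
    {T : C} {a b : Y ⟶ T} (hab : d ≫ a = d ≫ b) : a = b := by
  obtain ⟨t, -, hu⟩ := ExactStruct.isCokernel h (d ≫ a)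
    (by rw [← Category.assoc, ExactStruct.comp_zero h, zero_comp])
  exact (hu a rfl).trans (hu b hab.symm).symm

lemma infl_cancel {X E Y : C} {i : X ⟶ E} {d : E ⟶ Y} (h : ExactStruct.IsConflation i d)
    {T : C} {a b : T ⟶ X} (hab : a ≫ i = b ≫ i) : a = b := by
  obtain ⟨t, -, hu⟩ := ExactStruct.isKernel h (a ≫ i)
    (by rw [Category.assoc, ExactStruct.comp_zero h, comp_zero])
  exact (hu a rfl).trans (hu b hab.symm).symm

lemma split_epi_of_retraction {X E Y : C} {i : X ⟶ E} {d : E ⟶ Y}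
    (h : ExactStruct.IsConflation i d) {r : E ⟶ X} (hr : i ≫ r = 𝟙 X) :
    ∃ s : Y ⟶ E, s ≫ d = 𝟙 Y := by
  obtain ⟨t, ht, -⟩ := ExactStruct.isCokernel h (𝟙 E - r ≫ i)
    (by rw [Preadditive.comp_sub, Category.comp_id, ← Category.assoc, hr, Category.id_comp,
      sub_self])
  refine ⟨t, defl_cancel h ?_⟩
  rw [← Category.assoc, ht, Preadditive.sub_comp, Category.id_comp, Category.assoc,
    ExactStruct.comp_zero h, comp_zero, sub_zero, Category.comp_id]

end AuxLemmas

section Statement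

variable (k : Type u') [CommRing k] [IsArtinianRing k]
variable [Preadditive C] [CategoryTheory.Linear k C] [HasZeroObject C] [HasBinaryBiproducts C] [HasFiniteBiproducts C]
variable [∀ X Y : C, Module.Finite k (X ⟶ Y)] [KrullSchmidtCat C] [ExactStruct C]

/-- If the kernel `K` of the deflation `α` lies in `𝒞_l`, witnessed by a decomposition
`K ≅ I ⊕ K₁ ⊕ ⋯ ⊕ Kₙ` with `I` injective and almost split conflations `Kⱼ → Eⱼ → Tⱼ`
(so that `τ⁻ K = ⨁ T`), then `α` is right `τ⁻ K`-determined. -/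
theorem stmt_7 {K X Y : C} (iK : K ⟶ X) (α : X ⟶ Y)
    (hconf : ExactStruct.IsConflation iK α)
    (n : ℕ) (I : C) (hI : InjObj I)
    (Ki E T : Fin n → C) (ii : ∀ j, Ki j ⟶ E j) (dd : ∀ j, E j ⟶ T j)
    (hass : ∀ j, AlmostSplitConflation (ii j) (dd j))
    (hdec : Nonempty (K ≅ I ⊞ ⨁ Ki)) :
    RightDetermined α (⨁ T) := by
  obtain ⟨φ⟩ := hdec
  intro T' g hg
  -- pull back the conflation along `g`
  obtain ⟨Eb, g', β, hpb, K', i', hc'⟩ :=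
    ExactStruct.pullback_defl α g ⟨K, iK, hconf⟩
  -- comparison maps between the two kernels
  have hig : (i' ≫ g') ≫ α = 0 := by
    rw [Category.assoc, hpb.w, ← Category.assoc, ExactStruct.comp_zero hc', zero_comp]
  obtain ⟨κ, hκ, -⟩ := ExactStruct.isKernel hconf (i' ≫ g') hig
  have hiKα : iK ≫ α = (0 : K ⟶ T') ≫ g := by
    rw [ExactStruct.comp_zero hconf, zero_comp]
  set lam : K ⟶ Eb := hpb.lift iK 0 hiKα with hlam
  have hlam1 : lam ≫ g' = iK := hpb.lift_fst _ _ _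
  have hlam2 : lam ≫ β = 0 := hpb.lift_snd _ _ _
  obtain ⟨κ', hκ', -⟩ := ExactStruct.isKernel hc' lam hlam2
  have hκκ' : κ ≫ κ' = 𝟙 K' := by
    apply infl_cancel hc'
    rw [Category.id_comp, Category.assoc, hκ']
    apply hpb.hom_ext
    · rw [Category.assoc, hlam1, hκ]
    · rw [Category.assoc, hlam2, comp_zero, ExactStruct.comp_zero hc']
  -- every map from a `T j` into `T'` lifts through `β`
  have hlift : ∀ (j : Fin n) (h : T j ⟶ T'), ∃ u : T j ⟶ Eb, u ≫ β = h := by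
    intro j h
    obtain ⟨s, hs⟩ := hg (biproduct.π T j ≫ h)
    have hs' : (biproduct.ι T j ≫ s) ≫ α = h ≫ g := by
      rw [Category.assoc, ← hs, ← Category.assoc, ← Category.assoc, biproduct.ι_π_self,
        Category.id_comp]
    exact ⟨hpb.lift (biproduct.ι T j ≫ s) h hs', hpb.lift_snd _ _ _⟩
  -- components of the decomposition of K
  set qI : K ⟶ I := φ.hom ≫ biprod.fst with hqI
  set qk : ∀ j, K ⟶ Ki j := fun j => φ.hom ≫ biprod.snd ≫ biproduct.π Ki j with hqk
  -- extend `κ ≫ qI` along `i'` using injectivity of I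
  have hext_I : ∃ rI : Eb ⟶ I, i' ≫ rI = κ ≫ qI := by
    obtain ⟨P, ιI, g'', hpo, W, d, hcP⟩ :=
      ExactStruct.pushout_infl i' (κ ≫ qI) ⟨T', β, hc'⟩
    obtain ⟨r, hr⟩ := hI ιI ⟨W, d, hcP⟩
    refine ⟨g'' ≫ r, ?_⟩
    rw [← Category.assoc, hpo.w, Category.assoc, hr, Category.comp_id]
  -- extend each `κ ≫ qk j` along `i'` using the almost split conflations
  have hext : ∀ j, ∃ rj : Eb ⟶ Ki j, i' ≫ rj = κ ≫ qk j := by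
    intro j
    by_contra hno
    push_neg at hno
    obtain ⟨P, ι, g'', hpo, W, d, hcP⟩ :=
      ExactStruct.pushout_infl i' (κ ≫ qk j) ⟨T', β, hc'⟩
    -- ι is not a split mono
    have hιns : ¬ (∃ r : P ⟶ Ki j, ι ≫ r = 𝟙 (Ki j)) := by
      rintro ⟨r, hr⟩
      refine hno (g'' ≫ r) ?_
      rw [← Category.assoc, hpo.w, Category.assoc, hr, Category.comp_id]
    obtain ⟨t, ht⟩ := (hass j).2.1.2 ι hιns
    -- the cokernel map δ : P ⟶ T'
    have hδw : i' ≫ β = (κ ≫ qk j) ≫ (0 : Ki j ⟶ T') := by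
      rw [ExactStruct.comp_zero hc', comp_zero]
    set δ : P ⟶ T' := hpo.desc β 0 hδw with hδ
    have hδ1 : g'' ≫ δ = β := hpo.inl_desc _ _ _
    have hδ2 : ι ≫ δ = 0 := hpo.inr_desc _ _ _
    -- δ kills the same maps as d
    obtain ⟨w', hw', -⟩ := ExactStruct.isCokernel hcP δ hδ2
    obtain ⟨w, hw, -⟩ := ExactStruct.isCokernel hc' (g'' ≫ d)
      (by rw [← Category.assoc, hpo.w, Category.assoc, ExactStruct.comp_zero hcP, comp_zero])
    have hδw' : δ ≫ w = d := by
      apply hpo.hom_ext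
      · rw [← Category.assoc, hδ1, hw]
      · rw [← Category.assoc, hδ2, zero_comp, ExactStruct.comp_zero hcP]
    have hker : ∀ {Z : C} (v : Z ⟶ P), v ≫ δ = 0 → v ≫ d = 0 := by
      intro Z v hv
      rw [← hδw', ← Category.assoc, hv, zero_comp]
    -- the induced map h : T j ⟶ T'
    obtain ⟨h, hh, -⟩ := ExactStruct.isCokernel (hass j).1 (t ≫ δ)
      (by rw [← Category.assoc, ht, hδ2])
    obtain ⟨u, hu⟩ := hlift j h
    -- t - dd j ≫ u ≫ g'' kills δ, hence factors through ι
    have hv : (t - dd j ≫ u ≫ g'') ≫ δ = 0 := by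
      rw [Preadditive.sub_comp, Category.assoc, Category.assoc, hδ1, hu, hh, sub_self]
    obtain ⟨s, hsι, -⟩ := ExactStruct.isKernel hcP (t - dd j ≫ u ≫ g'') (hker _ hv)
    -- this makes ii j a split mono, contradicting almost split
    have : (ii j ≫ s) ≫ ι = 𝟙 (Ki j) ≫ ι := by
      rw [Category.assoc, hsι, Preadditive.comp_sub, ht, ← Category.assoc,
        ExactStruct.comp_zero (hass j).1, zero_comp, sub_zero, Category.id_comp]
    exact (hass j).2.1.1 ⟨s, infl_cancel hcP this⟩
  obtain ⟨rI, hrI⟩ := hext_I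
  choose rk hrk using hext
  -- assemble a retraction of i'
  have hretr : i' ≫ ((rI ≫ biprod.inl ≫ φ.inv +
      ∑ j, rk j ≫ biproduct.ι Ki j ≫ biprod.inr ≫ φ.inv) ≫ κ') = 𝟙 K' := by
    rw [← Category.assoc, Preadditive.comp_add, ← Category.assoc, hrI,
      Preadditive.comp_sum]
    have hsum : ∀ j ∈ Finset.univ, i' ≫ rk j ≫ biproduct.ι Ki j ≫ biprod.inr ≫ φ.inv
        = κ ≫ (φ.hom ≫ biprod.snd ≫ biproduct.π Ki j ≫ biproduct.ι Ki j ≫ biprod.inr) ≫ φ.inv := by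
      intro j _
      rw [← Category.assoc, hrk j, hqk]
      simp only [Category.assoc]
    rw [Finset.sum_congr rfl hsum]
    have hs2 : (∑ x : Fin n, κ ≫ (φ.hom ≫ biprod.snd ≫ biproduct.π Ki x ≫ biproduct.ι Ki x ≫ biprod.inr) ≫ φ.inv)
        = κ ≫ (φ.hom ≫ biprod.snd ≫ biprod.inr) ≫ φ.inv := by
      rw [← Preadditive.comp_sum]
      congr 1
      rw [← Preadditive.sum_comp]
      congr 1
      have he : ∀ x ∈ (Finset.univ : Finset (Fin n)), φ.hom ≫ biprod.snd ≫ biproduct.π Ki x ≫ biproduct.ι Ki x ≫ biprod.inr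
          = ((φ.hom ≫ biprod.snd) ≫ (biproduct.π Ki x ≫ biproduct.ι Ki x) ≫ biprod.inr :
            K ⟶ I ⊞ ⨁ Ki) := by
        intro x _; simp only [Category.assoc]
      rw [Finset.sum_congr rfl he, ← Preadditive.comp_sum, ← Preadditive.sum_comp,
        biproduct.total, Category.id_comp]
      simp only [Category.assoc]
    have hone : (κ ≫ qI) ≫ biprod.inl ≫ φ.inv = κ ≫ (φ.hom ≫ biprod.fst ≫ biprod.inl) ≫ φ.inv := by
      rw [hqI]; simp only [Category.assoc]
    have h2 : (φ.hom ≫ biprod.fst ≫ biprod.inl) ≫ φ.inv + (φ.hom ≫ biprod.snd ≫ biprod.inr) ≫ φ.inv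
        = 𝟙 K := by
      rw [← Preadditive.add_comp, ← Preadditive.comp_add, biprod.total]
      simp
    have hκeq : (κ ≫ qI) ≫ biprod.inl ≫ φ.inv +
        κ ≫ (φ.hom ≫ biprod.snd ≫ biprod.inr) ≫ φ.inv = κ := by
      rw [hone, ← Preadditive.comp_add, h2, Category.comp_id]
    rw [hs2, hκeq, hκκ']
  obtain ⟨sβ, hsβ⟩ := split_epi_of_retraction hc' hretr
  refine ⟨sβ ≫ g', ?_⟩
  rw [Category.assoc, hpb.w, ← Category.assoc, hsβ, Category.id_comp]

end Statement
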